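/- Let v be a non-root node in an STT T on a tree G, with parent p. If the rotation of v with p is not allowed (i.e., performing it would violate the 2-cut property), then |∂(T_v)| = 1 and |∂(T_p)| = 2; in particular, p is not the root of T and the rotation of p with its own parent is allowed. -/

import Mathlib

open SimpleGraph

variable {V : Type*}

/-- Reachability within a vertex set `S`. -/
def reachIn (G : SimpleGraph V) (S : Set V) : V → V → Prop :=
  Relation.ReflTransGen (fun x y => x ∈ S ∧ y ∈ S ∧ G.Adj x y)

/-- The connected component of `v` inside the vertex set `S`. -/
def compIn (G : SimpleGraph V) (S : Set V) (v : V) : Set V :=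
  {u | reachIn G S v u}

/-- `IsSearchTree G par S r`: the parent map `par` describes a search tree with root `r`
on the part of `G` induced by `S`, built recursively: the root `r` is chosen, and each
connected component of `S \ {r}` carries a search tree whose root is a child of `r`. -/
inductive IsSearchTree (G : SimpleGraph V) (par : V → Option V) : Set V → V → Prop where
  | node (S : Set V) (r : V) (ρ : V → V) (hr : r ∈ S)
      (hρ : ∀ v ∈ S, v ≠ r → par (ρ v) = some r)
      (h : ∀ v ∈ S, v ≠ r → IsSearchTree G par (compIn G (S \ {r}) v) (ρ v)) :
      IsSearchTree G par S r

/-- `isAnc par a v`: `a` is an ancestor of `v` (reflexively). -/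
def isAnc (par : V → Option V) (a v : V) : Prop :=
  Relation.ReflTransGen (fun x y => par x = some y) v a

/-- The subtree rooted at `v`: all descendants of `v` (including `v`). -/
def subtree (par : V → Option V) (v : V) : Set V := {u | isAnc par v u}

/-- The outer boundary `∂(T_v)` of the subtree rooted at `v`. -/
def bdry (G : SimpleGraph V) (par : V → Option V) (v : V) : Set V :=
  {x | x ∉ subtree par v ∧ ∃ u ∈ subtree par v, G.Adj x u}

/-- A search tree is 2-cut if every subtree boundary has size at most 2. -/
def TwoCut (G : SimpleGraph V) (par : V → Option V) : Prop :=
  ∀ v, (bdry G par v).ncard ≤ 2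

open Classical in
/-- The STT rotation of `v` with its parent `p`: `p` becomes a child of `v`, `v` takes the
former parent of `p`, and any child `c` of `v` with `p ∈ ∂(T_c)` is reattached to `p`. -/
noncomputable def rotate (G : SimpleGraph V) (par : V → Option V) (v p : V) :
    V → Option V := fun x =>
  if x = v then par p
  else if x = p then some v
  else if par x = some v ∧ p ∈ bdry G par x then some p
  else par x

/-- A splay step at `x`: a single rotation if `x` has no grandparent; a ZIG-ZAG
(two rotations at `x`) if `x` is a separator; a ZIG-ZIG (rotation at the parent,
then at `x`) otherwise. -/
noncomputable def splayStep (G : SimpleGraph V) (par : V → Option V) (x : V) :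
    V → Option V :=
  match par x with
  | none => par
  | some p =>
    match par p with
    | none => rotate G par x p
    | some g =>
      if (bdry G par x).ncard = 2 then
        rotate G (rotate G par x p) x g
      else
        rotate G (rotate G par p g) x p



section Util
variable {f : V → Option V}

def iterPar (f : V → Option V) : ℕ → V → Option V
  | 0, u => some u
  | n+1, u => (f u).bind (iterPar f n)

lemma isAnc_iff {a u : V} : isAnc f a u ↔ ∃ n, iterPar f n u = some a := by
  constructor
  · intro h
    induction h using Relation.ReflTransGen.head_induction_on with
    | refl => exact ⟨0, rfl⟩
    | head h' _ ih =>
      obtain ⟨n, hn⟩ := ih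
      exact ⟨n+1, by simp [iterPar, h', hn]⟩
  · rintro ⟨n, hn⟩
    induction n generalizing u with
    | zero => simp [iterPar] at hn; subst hn; exact .refl
    | succ n ih =>
      simp only [iterPar] at hn
      cases hfu : f u with
      | none => rw [hfu] at hn; simp at hn
      | some w =>
        rw [hfu] at hn; simp at hn
        exact Relation.ReflTransGen.head hfu (ih hn)

lemma iterPar_last {n : ℕ} {u a : V} (h : iterPar f (n+1) u = some a) :
    ∃ c, iterPar f n u = some c ∧ f c = some a := by
  induction n generalizing u with
  | zero =>
    simp only [iterPar] at h
    cases hfu : f u with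
    | none => rw [hfu] at h; simp at h
    | some w => rw [hfu] at h; simp [iterPar] at h; exact ⟨u, rfl, by rw [hfu, h]⟩
  | succ n ih =>
    simp only [iterPar] at h ⊢
    cases hfu : f u with
    | none => rw [hfu] at h; simp at h
    | some w =>
      rw [hfu] at h; simp at h
      obtain ⟨c, hc1, hc2⟩ := ih h
      exact ⟨c, by simp [hc1], hc2⟩

lemma anc_antisymm {r a b : V} (hroot : f r = none) (har : isAnc f r a)
    (hab : isAnc f b a) (hba : isAnc f a b) : a = b := by
  unfold isAnc at *
  have key : ∀ x, Relation.ReflTransGen (fun x y => f x = some y) x r →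
      ∀ b, Relation.ReflTransGen (fun x y => f x = some y) x b →
        Relation.ReflTransGen (fun x y => f x = some y) b x → x = b := by
    intro x hx
    induction hx using Relation.ReflTransGen.head_induction_on with
    | refl =>
      intro b h1 _
      rcases h1.cases_head with h | ⟨c, hc, _⟩
      · exact h
      · rw [hroot] at hc; cases hc
    | @head x y hxy hyr ih =>
      intro b h1 h2
      rcases h1.cases_head with h | ⟨c, hc, hcb⟩
      · exact h
      · rw [hxy] at hc; injection hc with hc; subst hc
        have hyb : y = b := ih b hcb (h2.tail hxy)
        subst hyb
        have hyx : y = x := ih x h2 (.single hxy)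
        exact hyx.symm
  exact key a har b hab hba

lemma no_self_parent {r a : V} (hroot : f r = none) (har : isAnc f r a)
    (h : f a = some a) : False := by
  unfold isAnc at har
  have key : ∀ x, Relation.ReflTransGen (fun x y => f x = some y) x r →
      f x = some x → False := by
    intro x hx
    induction hx using Relation.ReflTransGen.head_induction_on with
    | refl => intro h'; rw [hroot] at h'; cases h'
    | @head x y hxy hyr ih =>
      intro h'
      rw [h'] at hxy; injection hxy with hxy; subst hxy; exact ih h'
  exact key a har h

lemma anc_total {a b c : V} (hb : isAnc f b a) (hc : isAnc f c a) :
    isAnc f c b ∨ isAnc f b c := by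
  unfold isAnc at *
  have key : ∀ x, Relation.ReflTransGen (fun x y => f x = some y) x b →
      ∀ c, Relation.ReflTransGen (fun x y => f x = some y) x c →
        (Relation.ReflTransGen (fun x y => f x = some y) b c ∨
          Relation.ReflTransGen (fun x y => f x = some y) c b) := by
    intro x hx
    induction hx using Relation.ReflTransGen.head_induction_on with
    | refl => intro c hc'; exact Or.inl hc'
    | @head x y hxy hyb ih =>
      intro c hc'
      rcases hc'.cases_head with h | ⟨w, hw, hwc⟩
      · subst h; exact Or.inr (Relation.ReflTransGen.head hxy hyb)
      · rw [hxy] at hw; injection hw with hw; subst hw; exact ih c hwc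
  exact key a hb c hc

end Util


section Comp
variable {G : SimpleGraph V} {S T : Set V} {x y v w u : V}

lemma reachIn_mono (hST : S ⊆ T) (h : reachIn G S x y) : reachIn G T x y :=
  Relation.ReflTransGen.mono (fun a b (hab : a ∈ S ∧ b ∈ S ∧ G.Adj a b) =>
    (⟨hST hab.1, hST hab.2.1, hab.2.2⟩ : a ∈ T ∧ b ∈ T ∧ G.Adj a b)) x y h

lemma reachIn_symm (h : reachIn G S x y) : reachIn G S y x := by
  induction h with
  | refl => exact .refl
  | tail _ hstep ih =>
    exact Relation.ReflTransGen.head ⟨hstep.2.1, hstep.1, hstep.2.2.symm⟩ ih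

lemma reachIn_mem_right (h : reachIn G S x y) : x = y ∨ y ∈ S := by
  induction h with
  | refl => exact Or.inl rfl
  | tail _ hstep _ => exact Or.inr hstep.2.1

lemma mem_compIn_self : v ∈ compIn G S v := Relation.ReflTransGen.refl

lemma compIn_subset (hv : v ∈ S) : compIn G S v ⊆ S := fun u hu =>
  (reachIn_mem_right hu).elim (fun h => h ▸ hv) id

lemma reachIn_localize (h : reachIn G S v y) : reachIn G (compIn G S v) v y := by
  induction h with
  | refl => exact .refl
  | @tail y z hvy hstep ih =>
    exact ih.tail ⟨hvy, hvy.tail hstep, hstep.2.2⟩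

lemma compIn_conn (hx : x ∈ compIn G S v) (hy : y ∈ compIn G S v) :
    reachIn G (compIn G S v) x y :=
  (reachIn_symm (reachIn_localize hx)).trans (reachIn_localize hy)

lemma subtree_closed {f : V → Option V}
    (H1 : ∀ w u, w ∉ S → u ∈ S → f w ≠ some u) (hv : v ∈ S) :
    subtree f v ⊆ S := by
  intro u hu
  unfold subtree isAnc at hu
  induction hu using Relation.ReflTransGen.head_induction_on with
  | refl => exact hv
  | @head x c hxc _ ih =>
    by_contra hx
    exact H1 x c hx ih hxc

lemma parent_mem {f : V → Option V} {r : V} (hT : IsSearchTree G f S r) :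
    ∀ u ∈ S, u ≠ r → ∃ w, f u = some w ∧ (w = r ∨ reachIn G (S \ {r}) u w) := by
  induction hT with
  | node S r ρ hr hρ h IH =>
    intro u hu hne
    have hu' : u ∈ S \ {r} := ⟨hu, hne⟩
    by_cases hcase : u = ρ u
    · exact ⟨r, by rw [hcase]; exact hρ u hu hne, Or.inl rfl⟩
    · obtain ⟨w, hw1, hw2⟩ := IH u hu hne u mem_compIn_self hcase
      refine ⟨w, hw1, Or.inr ?_⟩
      rcases hw2 with rfl | hw2
      · cases h u hu hne with
        | node _ _ _ hr' _ _ => exact hr'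
      · refine reachIn_mono ?_ hw2
        intro z hz
        exact compIn_subset hu' hz.1

lemma reachIn_univ_of_reachable (h : G.Reachable x y) : reachIn G Set.univ x y := by
  obtain ⟨wlk⟩ := h
  induction wlk with
  | nil => exact .refl
  | cons hadj _ ih =>
    exact Relation.ReflTransGen.head ⟨trivial, trivial, hadj⟩ ih

end Comp


section Main
variable {G : SimpleGraph V} {f : V → Option V} {S : Set V} {r : V}

lemma stt_main (hT : IsSearchTree G f S r) :
    (∀ w u, w ∉ S → u ∈ S → f w ≠ some u) →
    (∀ u ∈ S, f r ≠ some u) →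
    (∀ x ∈ S, ∀ y ∈ S, reachIn G S x y) →
    (∀ x, x ∉ S → ∀ u ∈ S, G.Adj x u → isAnc f x r) →
    (∀ q, f r = some q → ∃ u ∈ S, G.Adj q u) →
    ((∀ u ∈ S, isAnc f r u) ∧
     (∀ v ∈ S, ∀ x u, x ∉ subtree f v → u ∈ subtree f v → G.Adj x u → isAnc f x v) ∧
     (∀ v ∈ S, ∀ q, f v = some q → ∃ u ∈ subtree f v, G.Adj q u) ∧
     (∀ v ∈ S, ∀ x ∈ subtree f v, ∀ y ∈ subtree f v, reachIn G (subtree f v) x y)) := by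
  induction hT with
  | node S r ρ hr hρ h IH =>
    intro H1 J H2 H4 H5
    have hTfull : IsSearchTree G f S r := .node S r ρ hr hρ h
    set C : V → Set V := fun v => compIn G (S \ {r}) v with hC
    have hCsub : ∀ v ∈ S, v ≠ r → C v ⊆ S \ {r} := by
      intro v hv hne
      exact compIn_subset ⟨hv, hne⟩
    -- invariants for components
    have hH1C : ∀ v, v ∈ S → v ≠ r → ∀ w u, w ∉ C v → u ∈ C v → f w ≠ some u := by
      intro v hv hne w u hw hu heq
      have huS : u ∈ S \ {r} := hCsub v hv hne hu
      by_cases hwS : w ∈ S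
      · by_cases hwr : w = r
        · exact J u huS.1 (hwr ▸ heq)
        · obtain ⟨z, hz1, hz2⟩ := parent_mem hTfull w hwS hwr
          rw [heq] at hz1; injection hz1 with hz1; subst hz1
          rcases hz2 with rfl | hz2
          · exact huS.2 rfl
          · exact hw (hu.trans (reachIn_symm hz2))
      · exact H1 w u hwS huS.1 heq
    have hJC : ∀ v, v ∈ S → v ≠ r → ∀ u ∈ C v, f (ρ v) ≠ some u := by
      intro v hv hne u hu heq
      rw [hρ v hv hne] at heq; injection heq with heq
      exact (hCsub v hv hne hu).2 heq.symm
    have hH2C : ∀ v, v ∈ S → v ≠ r → ∀ x ∈ C v, ∀ y ∈ C v, reachIn G (C v) x y := by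
      intro v _ _ x hx y hy
      exact compIn_conn hx hy
    have hH4C : ∀ v, v ∈ S → v ≠ r → ∀ x, x ∉ C v → ∀ u ∈ C v, G.Adj x u →
        isAnc f x (ρ v) := by
      intro v hv hne x hx u hu hadj
      have huS := hCsub v hv hne hu
      by_cases hxS : x ∈ S
      · by_cases hxr : x = r
        · subst hxr
          exact Relation.ReflTransGen.single (hρ v hv hne)
        · exact absurd (hu.tail ⟨huS, ⟨hxS, hxr⟩, hadj.symm⟩) hx
      · exact Relation.ReflTransGen.head (hρ v hv hne) (H4 x hxS u huS.1 hadj)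
    have hH5C : ∀ v, v ∈ S → v ≠ r → ∀ q, f (ρ v) = some q → ∃ u ∈ C v, G.Adj q u := by
      intro v hv hne q hq
      rw [hρ v hv hne] at hq; injection hq with hq; subst hq
      have key : ∀ z, reachIn G S v z → z ∈ C v ∨ ∃ u ∈ C v, G.Adj r u := by
        intro z hz
        induction hz with
        | refl => exact Or.inl mem_compIn_self
        | @tail y z hvy hstep ih =>
          rcases ih with hyC | hdone
          · by_cases hzr : z = r
            · exact Or.inr ⟨y, hyC, hzr ▸ hstep.2.2.symm⟩
            · exact Or.inl (hyC.tail ⟨hCsub v hv hne hyC, ⟨hstep.2.1, hzr⟩, hstep.2.2⟩)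
          · exact Or.inr hdone
      rcases key r (H2 v hv r hr) with hrC | hdone
      · exact absurd rfl (hCsub v hv hne hrC).2
      · exact hdone
    have hconc := fun v (hv : v ∈ S) (hne : v ≠ r) =>
      IH v hv hne (hH1C v hv hne) (hJC v hv hne) (hH2C v hv hne) (hH4C v hv hne)
        (hH5C v hv hne)
    -- conclusion (a)
    have ha : ∀ u ∈ S, isAnc f r u := by
      intro u hu
      by_cases hur : u = r
      · exact hur ▸ Relation.ReflTransGen.refl
      · have := (hconc u hu hur).1 u mem_compIn_self
        exact Relation.ReflTransGen.tail this (hρ u hu hur)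
    have hTrS : subtree f r = S :=
      subset_antisymm (subtree_closed H1 hr) (fun u hu => ha u hu)
    refine ⟨ha, ?_, ?_, ?_⟩
    · intro v hv x u hx hu hadj
      by_cases hvr : v = r
      · subst hvr
        rw [hTrS] at hx hu
        exact H4 x hx u hu hadj
      · exact (hconc v hv hvr).2.1 v mem_compIn_self x u hx hu hadj
    · intro v hv q hq
      by_cases hvr : v = r
      · subst hvr
        obtain ⟨u, huS, hadj⟩ := H5 q hq
        exact ⟨u, hTrS ▸ huS, hadj⟩
      · exact (hconc v hv hvr).2.2.1 v mem_compIn_self q hq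
    · intro v hv x hx y hy
      by_cases hvr : v = r
      · subst hvr
        rw [hTrS] at hx hy ⊢
        exact H2 x hx y hy
      · exact (hconc v hv hvr).2.2.2 v mem_compIn_self x hx y hy

lemma stt_global (hroot : f r = none) (hT : IsSearchTree G f Set.univ r)
    (hGc : G.Connected) :
    (∀ u, isAnc f r u) ∧
    (∀ v x u, x ∉ subtree f v → u ∈ subtree f v → G.Adj x u → isAnc f x v) ∧
    (∀ v q, f v = some q → ∃ u ∈ subtree f v, G.Adj q u) ∧
    (∀ v, ∀ x ∈ subtree f v, ∀ y ∈ subtree f v, reachIn G (subtree f v) x y) := by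
  have H1 : ∀ w u, w ∉ (Set.univ : Set V) → u ∈ (Set.univ : Set V) → f w ≠ some u :=
    fun w _ hw _ _ => hw trivial
  have J : ∀ u ∈ (Set.univ : Set V), f r ≠ some u := by
    intro u _ h; rw [hroot] at h; cases h
  have H2 : ∀ x ∈ (Set.univ : Set V), ∀ y ∈ (Set.univ : Set V), reachIn G Set.univ x y :=
    fun x _ y _ => reachIn_univ_of_reachable (hGc.preconnected x y)
  have H4 : ∀ x, x ∉ (Set.univ : Set V) → ∀ u ∈ (Set.univ : Set V), G.Adj x u → isAnc f x r :=
    fun x hx => absurd trivial hx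
  have H5 : ∀ q, f r = some q → ∃ u ∈ (Set.univ : Set V), G.Adj q u := by
    intro q h; rw [hroot] at h; cases h
  obtain ⟨a, b, c, d⟩ := stt_main hT H1 J H2 H4 H5
  exact ⟨fun u => a u trivial, fun v => b v trivial, fun v => c v trivial,
    fun v => d v trivial⟩

end Main

section Tree
variable {G : SimpleGraph V} {C : Set V} {x u₁ u₂ : V}

lemma reachIn_walk {a b : V} (h : reachIn G C a b) (ha : a ∈ C) :
    ∃ w : G.Walk a b, ∀ z ∈ w.support, z ∈ C := by
  induction h with
  | refl => exact ⟨.nil, by simp [ha]⟩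
  | @tail y z hay hstep ih =>
    obtain ⟨w, hw⟩ := ih
    refine ⟨w.append (.cons hstep.2.2 .nil), ?_⟩
    intro t ht
    rw [SimpleGraph.Walk.support_append] at ht
    rcases List.mem_append.mp ht with h1 | h2
    · exact hw t h1
    · simp at h2; exact h2 ▸ hstep.2.1

lemma unique_edge (hG : G.IsTree) (hconn : ∀ a b, a ∈ C → b ∈ C → reachIn G C a b)
    (hx : x ∉ C) (h1 : u₁ ∈ C) (h2 : u₂ ∈ C)
    (a1 : G.Adj x u₁) (a2 : G.Adj x u₂) : u₁ = u₂ := by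
  classical
  obtain ⟨w, hw⟩ := reachIn_walk (hconn u₁ u₂ h1 h2) h1
  have hqp : w.bypass.IsPath := SimpleGraph.Walk.bypass_isPath w
  have hqsupp : ∀ z ∈ w.bypass.support, z ∈ C :=
    fun z hz => hw z (w.support_bypass_subset hz)
  have hxnot : x ∉ w.bypass.support := fun h => hx (hqsupp x h)
  have hP1 : (SimpleGraph.Walk.cons a1 w.bypass).IsPath := hqp.cons hxnot
  have hP2 : (SimpleGraph.Walk.cons a2 .nil).IsPath := by
    refine SimpleGraph.Walk.IsPath.nil.cons ?_
    simp only [SimpleGraph.Walk.support_nil, List.mem_singleton]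
    intro h; exact hx (h ▸ h2)
  have := isAcyclic_iff_path_unique.mp hG.IsAcyclic ⟨_, hP1⟩ ⟨_, hP2⟩
  have hlen := congrArg (fun p : G.Path x u₂ => p.1.length) this
  simp only [SimpleGraph.Walk.length_cons, SimpleGraph.Walk.length_nil] at hlen
  exact SimpleGraph.Walk.eq_of_length_eq_zero (p := w.bypass) (by omega)

end Tree


section Rot
variable {G : SimpleGraph V} {f : V → Option V} {v p : V}

lemma rotate_at_v : rotate G f v p v = f p := by simp [rotate]

lemma rotate_at_p (h : p ≠ v) : rotate G f v p p = some v := by simp [rotate, h]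

lemma rotate_moved {x : V} (h1 : x ≠ v) (h2 : x ≠ p) (h3 : f x = some v)
    (h4 : p ∈ bdry G f x) : rotate G f v p x = some p := by
  simp [rotate, h1, h2, h3, h4]

lemma rotate_other {x : V} (h1 : x ≠ v) (h2 : x ≠ p)
    (h3 : ¬(f x = some v ∧ p ∈ bdry G f x)) : rotate G f v p x = f x := by
  simp only [rotate, if_neg h1, if_neg h2, if_neg h3]

lemma bdry_congr {f g : V → Option V} {x y : V} (h : subtree f x = subtree g y) :
    bdry G f x = bdry G g y := by
  unfold bdry; rw [h]

lemma exists_child {f : V → Option V} {x w : V} (hx : x ∈ subtree f w) (hne : x ≠ w) :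
    ∃ c, f c = some w ∧ x ∈ subtree f c := by
  obtain ⟨n, hn⟩ := isAnc_iff.mp hx
  cases n with
  | zero => simp [iterPar] at hn; exact absurd hn hne
  | succ n =>
    obtain ⟨c, hc1, hc2⟩ := iterPar_last hn
    exact ⟨c, hc2, isAnc_iff.mpr ⟨n, hc1⟩⟩

lemma rot_subtree_v (hvp : f v = some p) (hvne : v ≠ p) :
    subtree (rotate G f v p) v = subtree f p := by
  ext u
  simp only [subtree, Set.mem_setOf_eq]
  constructor
  · intro h
    obtain ⟨n, hn⟩ := isAnc_iff.mp h
    clear h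
    induction n using Nat.strong_induction_on generalizing u with
    | _ n ih =>
      cases n with
      | zero => simp [iterPar] at hn; subst hn; exact .single hvp
      | succ n =>
        by_cases huv : u = v
        · rw [huv]; exact .single hvp
        by_cases hup : u = p
        · rw [hup]; exact .refl
        by_cases hmv : f u = some v ∧ p ∈ bdry G f u
        · exact Relation.ReflTransGen.head hmv.1 (.single hvp)
        · simp only [iterPar, rotate_other huv hup hmv] at hn
          cases hfu : f u with
          | none => rw [hfu] at hn; simp at hn
          | some w =>
            rw [hfu] at hn; simp only [Option.bind_some] at hn
            exact Relation.ReflTransGen.head hfu (ih n (by omega) _ hn)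
  · intro h
    obtain ⟨n, hn⟩ := isAnc_iff.mp h
    clear h
    induction n using Nat.strong_induction_on generalizing u with
    | _ n ih =>
      cases n with
      | zero =>
        simp [iterPar] at hn; subst hn
        exact .single (rotate_at_p (Ne.symm hvne))
      | succ n =>
        by_cases huv : u = v
        · rw [huv]; exact .refl
        by_cases hup : u = p
        · rw [hup]; exact .single (rotate_at_p (Ne.symm hvne))
        by_cases hmv : f u = some v ∧ p ∈ bdry G f u
        · exact Relation.ReflTransGen.head (rotate_moved huv hup hmv.1 hmv.2)
            (.single (rotate_at_p (Ne.symm hvne)))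
        · simp only [iterPar] at hn
          cases hfu : f u with
          | none => rw [hfu] at hn; simp at hn
          | some w =>
            rw [hfu] at hn; simp only [Option.bind_some] at hn
            exact Relation.ReflTransGen.head
              (by rw [rotate_other huv hup hmv]; exact hfu) (ih n (by omega) _ hn)

lemma rot_subtree_other {x : V} (hvp : f v = some p) (hvne : v ≠ p)
    (hxv : x ≠ v) (hxp : x ≠ p) :
    subtree (rotate G f v p) x = subtree f x := by
  ext u
  simp only [subtree, Set.mem_setOf_eq]
  constructor
  · intro h
    obtain ⟨n, hn⟩ := isAnc_iff.mp h
    clear h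
    induction n using Nat.strong_induction_on generalizing u with
    | _ n ih =>
      cases n with
      | zero => simp [iterPar] at hn; subst hn; exact .refl
      | succ n =>
        simp only [iterPar] at hn
        by_cases huv : u = v
        · rw [huv] at hn ⊢
          rw [rotate_at_v] at hn
          cases hfp : f p with
          | none => rw [hfp] at hn; simp at hn
          | some w =>
            rw [hfp] at hn; simp only [Option.bind_some] at hn
            exact Relation.ReflTransGen.head hvp
              (Relation.ReflTransGen.head hfp (ih n (by omega) _ hn))
        by_cases hup : u = p
        · rw [hup] at hn ⊢
          rw [rotate_at_p (Ne.symm hvne)] at hn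
          simp only [Option.bind_some] at hn
          cases n with
          | zero => simp [iterPar] at hn; exact absurd hn.symm hxv
          | succ m =>
            simp only [iterPar, rotate_at_v] at hn
            cases hfp : f p with
            | none => rw [hfp] at hn; simp at hn
            | some w =>
              rw [hfp] at hn; simp only [Option.bind_some] at hn
              exact Relation.ReflTransGen.head hfp (ih m (by omega) _ hn)
        by_cases hmv : f u = some v ∧ p ∈ bdry G f u
        · rw [rotate_moved huv hup hmv.1 hmv.2] at hn
          simp only [Option.bind_some] at hn
          have hpx := ih n (by omega) _ hn
          exact Relation.ReflTransGen.head hmv.1 (Relation.ReflTransGen.head hvp hpx)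
        · rw [rotate_other huv hup hmv] at hn
          cases hfu : f u with
          | none => rw [hfu] at hn; simp at hn
          | some w =>
            rw [hfu] at hn; simp only [Option.bind_some] at hn
            exact Relation.ReflTransGen.head hfu (ih n (by omega) _ hn)
  · intro h
    obtain ⟨n, hn⟩ := isAnc_iff.mp h
    clear h
    induction n using Nat.strong_induction_on generalizing u with
    | _ n ih =>
      cases n with
      | zero => simp [iterPar] at hn; subst hn; exact .refl
      | succ n =>
        simp only [iterPar] at hn
        by_cases huv : u = v
        · rw [huv] at hn ⊢
          rw [hvp] at hn; simp only [Option.bind_some] at hn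
          cases n with
          | zero => simp [iterPar] at hn; exact absurd hn.symm hxp
          | succ m =>
            simp only [iterPar] at hn
            cases hfp : f p with
            | none => rw [hfp] at hn; simp at hn
            | some w =>
              rw [hfp] at hn; simp only [Option.bind_some] at hn
              refine Relation.ReflTransGen.head (b := w) (by rw [rotate_at_v]; exact hfp)
                (ih m (by omega) _ hn)
        by_cases hup : u = p
        · rw [hup] at hn ⊢
          cases hfp : f p with
          | none => rw [hfp] at hn; simp at hn
          | some w =>
            rw [hfp] at hn; simp only [Option.bind_some] at hn
            refine Relation.ReflTransGen.head (rotate_at_p (Ne.symm hvne)) ?_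
            exact Relation.ReflTransGen.head (b := w) (by rw [rotate_at_v]; exact hfp)
              (ih n (by omega) _ hn)
        by_cases hmv : f u = some v ∧ p ∈ bdry G f u
        · rw [hmv.1] at hn; simp only [Option.bind_some] at hn
          cases n with
          | zero => simp [iterPar] at hn; exact absurd hn.symm hxv
          | succ m =>
            simp only [iterPar, hvp] at hn
            simp only [Option.bind_some] at hn
            exact Relation.ReflTransGen.head (rotate_moved huv hup hmv.1 hmv.2)
              (ih m (by omega) _ hn)
        · cases hfu : f u with
          | none => rw [hfu] at hn; simp at hn
          | some w =>
            rw [hfu] at hn; simp only [Option.bind_some] at hn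
            exact Relation.ReflTransGen.head
              (by rw [rotate_other huv hup hmv]; exact hfu) (ih n (by omega) _ hn)

end Rot

section RotP
variable {G : SimpleGraph V} {f : V → Option V} {v p : V}

/-- upper bound on the new subtree of `p` -/
lemma rot_subtree_p_sub (hvp : f v = some p)
    (hs : ∀ a b : V, isAnc f b a → isAnc f a b → a = b)
    (hnsp : ∀ a : V, f a = some a → False)
    (hPv : p ∉ subtree f v) :
    ∀ u ∈ subtree (rotate G f v p) p,
      (u ∈ subtree f p ∧ u ∉ subtree f v) ∨
        ∃ c, f c = some v ∧ p ∈ bdry G f c ∧ u ∈ subtree f c := by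
  intro u hu
  obtain ⟨n, hn⟩ := isAnc_iff.mp hu
  clear hu
  induction n using Nat.strong_induction_on generalizing u with
  | _ n ih =>
    cases n with
    | zero =>
      simp [iterPar] at hn; rw [hn]
      exact Or.inl ⟨.refl, hPv⟩
    | succ n =>
      by_cases hup : u = p
      · rw [hup]; exact Or.inl ⟨.refl, hPv⟩
      by_cases huv : u = v
      · exfalso
        rw [huv] at hn
        simp only [iterPar, rotate_at_v] at hn
        cases hfp : f p with
        | none => rw [hfp] at hn; simp at hn
        | some w =>
          rw [hfp] at hn; simp only [Option.bind_some] at hn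
          rcases ih n (by omega) _ hn with ⟨hwp, hwv⟩ | ⟨c, hcv, hcb, hwc⟩
          · have hw : w = p := hs w p hwp (.single hfp)
            rw [hw] at hfp
            exact hnsp p hfp
          · have hwv : w ∈ subtree f v := Relation.ReflTransGen.tail hwc hcv
            exact hPv (Relation.ReflTransGen.head hfp hwv)
      by_cases hmv : f u = some v ∧ p ∈ bdry G f u
      · exact Or.inr ⟨u, hmv.1, hmv.2, .refl⟩
      · simp only [iterPar, rotate_other huv hup hmv] at hn
        cases hfu : f u with
        | none => rw [hfu] at hn; simp at hn
        | some w =>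
          rw [hfu] at hn; simp only [Option.bind_some] at hn
          rcases ih n (by omega) _ hn with ⟨hwp, hwv⟩ | ⟨c, hcv, hcb, hwc⟩
          · refine Or.inl ⟨Relation.ReflTransGen.head hfu hwp, fun huTv => ?_⟩
            rcases huTv.cases_head with h | ⟨c', hc', hrest⟩
            · exact huv h
            · rw [hfu] at hc'; injection hc' with hc'; rw [← hc'] at hrest
              exact hwv hrest
          · exact Or.inr ⟨c, hcv, hcb, Relation.ReflTransGen.head hfu hwc⟩

lemma rot_subtree_p_sup1 (hvp : f v = some p) :
    ∀ u, u ∈ subtree f p → u ∉ subtree f v → u ∈ subtree (rotate G f v p) p := by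
  intro u hu hunv
  obtain ⟨n, hn⟩ := isAnc_iff.mp hu
  clear hu
  induction n using Nat.strong_induction_on generalizing u with
  | _ n ih =>
    cases n with
    | zero => simp [iterPar] at hn; rw [hn]; exact .refl
    | succ n =>
      by_cases hup : u = p
      · rw [hup]; exact .refl
      have huv : u ≠ v := fun h => hunv (h ▸ Relation.ReflTransGen.refl)
      have hmv : ¬(f u = some v ∧ p ∈ bdry G f u) := by
        rintro ⟨h1, _⟩
        exact hunv (.single h1)
      simp only [iterPar] at hn
      cases hfu : f u with
      | none => rw [hfu] at hn; simp at hn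
      | some w =>
        rw [hfu] at hn; simp only [Option.bind_some] at hn
        have hwnv : w ∉ subtree f v := fun hw =>
          hunv (Relation.ReflTransGen.head hfu hw)
        exact Relation.ReflTransGen.head
          (by rw [rotate_other huv hup hmv]; exact hfu) (ih n (by omega) _ hwnv hn)

lemma rot_subtree_p_sup2 (hvp : f v = some p) {c : V}
    (hc : f c = some v) (hcb : p ∈ bdry G f c)
    (hvc : v ∉ subtree f c) (hpc : p ∉ subtree f c) :
    ∀ u ∈ subtree f c, u ∈ subtree (rotate G f v p) p := by
  have hcnv : c ≠ v := fun h => hvc (h ▸ Relation.ReflTransGen.refl)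
  have hcnp : c ≠ p := fun h => hpc (h ▸ Relation.ReflTransGen.refl)
  intro u hu
  obtain ⟨n, hn⟩ := isAnc_iff.mp hu
  clear hu
  induction n using Nat.strong_induction_on generalizing u with
  | _ n ih =>
    cases n with
    | zero =>
      simp [iterPar] at hn; rw [hn]
      exact .single (rotate_moved hcnv hcnp hc hcb)
    | succ n =>
      by_cases huc : u = c
      · rw [huc]; exact .single (rotate_moved hcnv hcnp hc hcb)
      have huv : u ≠ v := by
        rintro rfl
        exact hvc (isAnc_iff.mpr ⟨n + 1, hn⟩)
      have hup : u ≠ p := by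
        rintro rfl
        exact hpc (isAnc_iff.mpr ⟨n + 1, hn⟩)
      have hmv : ¬(f u = some v ∧ p ∈ bdry G f u) := by
        rintro ⟨h1, _⟩
        simp only [iterPar, h1, Option.bind_some] at hn
        exact hvc (isAnc_iff.mpr ⟨n, hn⟩)
      simp only [iterPar] at hn
      cases hfu : f u with
      | none => rw [hfu] at hn; simp at hn
      | some w =>
        rw [hfu] at hn; simp only [Option.bind_some] at hn
        exact Relation.ReflTransGen.head
          (by rw [rotate_other huv hup hmv]; exact hfu) (ih n (by omega) _ hn)

end RotP


section Preserve
variable [Fintype V] {G : SimpleGraph V} {f : V → Option V} {r v p : V}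

lemma rot_preserves (hG : G.IsTree) (hroot : f r = none)
    (hT : IsSearchTree G f Set.univ r) (h2 : TwoCut G f)
    (hvp : f v = some p)
    (hcond : ¬((bdry G f v).ncard = 1 ∧ (bdry G f p).ncard = 2)) :
    TwoCut G (rotate G f v p) := by
  obtain ⟨ha, hb, hc, hd⟩ := stt_global hroot hT hG.isConnected
  have hs : ∀ a b : V, isAnc f b a → isAnc f a b → a = b :=
    fun a b h1 h2' => anc_antisymm hroot (ha a) h1 h2'
  have hnsp : ∀ a : V, f a = some a → False := fun a h => no_self_parent hroot (ha a) h
  have hvne : v ≠ p := fun h => hnsp v (h ▸ hvp)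
  have hPv : p ∉ subtree f v := fun h => hvne (hs p v h (.single hvp)).symm
  have hpb : p ∈ bdry G f v := ⟨hPv, hc v p hvp⟩
  have hTvp : subtree f v ⊆ subtree f p := fun u hu => Relation.ReflTransGen.tail hu hvp
  have hvTp : v ∈ subtree f p := Relation.ReflTransGen.single hvp
  have hvnotc : ∀ c, f c = some v → v ∉ subtree f c := by
    intro c hcv h
    have hvc : v = c := hs v c h (.single hcv)
    exact hnsp c (hvc ▸ hcv)
  have hpnotc : ∀ c, f c = some v → p ∉ subtree f c := fun c hcv h =>
    hPv (Relation.ReflTransGen.tail h hcv)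
  have hTcv : ∀ c, f c = some v → subtree f c ⊆ subtree f v := fun c hcv u hu =>
    Relation.ReflTransGen.tail hu hcv
  have hT'p_sub := rot_subtree_p_sub (G := G) hvp hs hnsp hPv
  have hT'p_sup1 := rot_subtree_p_sup1 (G := G) hvp
  have hT'p_sup2 : ∀ c, f c = some v → p ∈ bdry G f c →
      ∀ u ∈ subtree f c, u ∈ subtree (rotate G f v p) p :=
    fun c h1 h2' => rot_subtree_p_sup2 hvp h1 h2' (hvnotc c h1) (hpnotc c h1)
  have hT'p_Tp : subtree (rotate G f v p) p ⊆ subtree f p := by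
    intro u hu
    rcases hT'p_sub u hu with ⟨h1, _⟩ | ⟨c, hcv, _, huc⟩
    · exact h1
    · exact hTvp (hTcv c hcv huc)
  have hvT'p : v ∉ subtree (rotate G f v p) p := by
    intro h
    rcases hT'p_sub v h with ⟨_, h2'⟩ | ⟨c, hcv, _, hvc⟩
    · exact h2' Relation.ReflTransGen.refl
    · exact hvnotc c hcv hvc
  have hdisj : ∀ c c', f c = some v → f c' = some v → c ≠ c' →
      ∀ u, u ∈ subtree f c → u ∈ subtree f c' → False := by
    intro c c' h1 h2' hne u hu1 hu2
    rcases anc_total hu1 hu2 with h | h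
    · rcases h.cases_head with hcc | ⟨w, hw, hrest⟩
      · exact hne hcc
      · rw [h1] at hw; injection hw with hw; rw [← hw] at hrest
        exact hvnotc c' h2' hrest
    · rcases h.cases_head with hcc | ⟨w, hw, hrest⟩
      · exact hne hcc.symm
      · rw [h2'] at hw; injection hw with hw; rw [← hw] at hrest
        exact hvnotc c h1 hrest
  have hSUBV : bdry G (rotate G f v p) p ⊆ bdry G f p ∪ {v} := by
    rintro x ⟨hxT', u, huT', hadj⟩
    by_cases hxv : x = v
    · exact Or.inr (by simp [hxv])
    refine Or.inl ⟨fun hxTp => ?_, u, hT'p_Tp huT', hadj⟩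
    have hxTv : x ∈ subtree f v := by
      by_contra hxTv
      exact hxT' (hT'p_sup1 x hxTp hxTv)
    obtain ⟨c, hcv, hxc⟩ := exists_child hxTv hxv
    have hcum : p ∉ bdry G f c := fun hm => hxT' (hT'p_sup2 c hcv hm x hxc)
    have huc : u ∉ subtree f c := by
      intro huc
      rcases hT'p_sub u huT' with ⟨_, hunv⟩ | ⟨c', hc'v, hc'b, huc'⟩
      · exact hunv (hTcv c hcv huc)
      · by_cases hcc : c' = c
        · rw [hcc] at hc'b; exact hcum hc'b
        · exact hdisj c' c hc'v hcv hcc u huc' huc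
    have hanc : isAnc f u c := hb c u x huc hxc hadj.symm
    rcases hanc.cases_head with hcu | ⟨w, hw, hrest⟩
    · exact huc (by rw [← hcu]; exact Relation.ReflTransGen.refl)
    · rw [hcv] at hw; injection hw with hw; rw [← hw] at hrest
      rcases hrest.cases_head with hvu | ⟨w2, hw2, hrest2⟩
      · rw [← hvu] at huT'; exact hvT'p huT'
      · rw [hvp] at hw2; injection hw2 with hw2; rw [← hw2] at hrest2
        have hup : u = p := hs u p (hT'p_Tp huT') hrest2
        rw [hup] at hadj
        exact hcum ⟨by rw [← hup]; exact huc, x, hxc, hadj.symm⟩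
  intro x
  by_cases hxv : x = v
  · rw [hxv]
    rw [bdry_congr (rot_subtree_v (G := G) (v := v) (p := p) hvp hvne)]
    exact h2 p
  by_cases hxp : x = p
  case neg =>
    rw [bdry_congr (rot_subtree_other hvp hvne hxv hxp)]; exact h2 x
  rw [hxp]
  by_cases hP2 : (bdry G f p).ncard = 2
  case neg =>
    have h1 : (bdry G f p).ncard ≤ 1 := by have := h2 p; omega
    have := Set.ncard_le_ncard hSUBV (Set.toFinite _)
    have h3 := Set.ncard_union_le (bdry G f p) ({v} : Set V)
    rw [Set.ncard_singleton] at h3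
    omega
  have hV2 : (bdry G f v).ncard = 2 := by
    have hle := h2 v
    have hpos : 0 < (bdry G f v).ncard :=
      (Set.ncard_pos (Set.toFinite _)).mpr ⟨p, hpb⟩
    have hne1 : (bdry G f v).ncard ≠ 1 := fun h => hcond ⟨h, hP2⟩
    omega
  obtain ⟨a, b, hab, habs⟩ := Set.ncard_eq_two.mp hV2
  have hpmem : p ∈ ({a, b} : Set V) := habs ▸ hpb
  obtain ⟨g, hgp, hgv⟩ : ∃ g, g ≠ p ∧ bdry G f v = {p, g} := by
    rcases Set.mem_insert_iff.mp hpmem with hpa | hpb'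
    · refine ⟨b, ?_, by rw [habs, hpa]⟩
      exact fun h => hab (h.trans hpa).symm
    · rw [Set.mem_singleton_iff] at hpb'
      refine ⟨a, ?_, by rw [habs, hpb', Set.pair_comm]⟩
      exact fun h => hab (h.trans hpb')
  have hgbv : g ∈ bdry G f v := by rw [hgv]; right; rfl
  obtain ⟨hgnotTv, u', hu', hadj'⟩ := hgbv
  have hancg : isAnc f g v := hb v g u' hgnotTv hu' hadj'
  have hgTp : g ∉ subtree f p := by
    rcases hancg.cases_head with hvg | ⟨w, hw, hrest⟩
    · exact absurd (by rw [← hvg]; exact Relation.ReflTransGen.refl) hgnotTv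
    · rw [hvp] at hw; injection hw with hw; rw [← hw] at hrest
      intro hgTp'
      exact hgp (hs g p hgTp' hrest)
  have hgbp : g ∈ bdry G f p := ⟨hgTp, u', hTvp hu', hadj'⟩
  have hEXCL : ¬(g ∈ bdry G (rotate G f v p) p ∧ v ∈ bdry G (rotate G f v p) p) := by
    rintro ⟨⟨hgT', u, huT', hadj_gu⟩, ⟨_, y, hyT', hadj_vy⟩⟩
    have huu : u = u' :=
      unique_edge hG (fun s t hs' ht' => hd p s hs' t ht') hgTp
        (hT'p_Tp huT') (hTvp hu') hadj_gu hadj'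
    have huTv : u ∈ subtree f v := by rw [huu]; exact hu'
    rcases hT'p_sub u huT' with ⟨_, hx⟩ | ⟨c0, hc0v, hc0b, huc0⟩
    · exact hx huTv
    obtain ⟨hpnc0, z0, hz0, hadj_pz0⟩ := hc0b
    rcases hT'p_sub y hyT' with ⟨hyTp, hyTv⟩ | ⟨c1, hc1v, hc1b, hyc1⟩
    · have hybd : y ∈ bdry G f v := ⟨hyTv, v, Relation.ReflTransGen.refl, hadj_vy.symm⟩
      rw [hgv] at hybd
      rcases Set.mem_insert_iff.mp hybd with hyp | hyg
      · rw [hyp] at hadj_vy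
        have hvz0 : v = z0 :=
          unique_edge hG (fun s t hs' ht' => hd v s hs' t ht') hPv
            Relation.ReflTransGen.refl (hTcv c0 hc0v hz0) hadj_vy.symm hadj_pz0
        exact hvnotc c0 hc0v (hvz0 ▸ hz0)
      · rw [Set.mem_singleton_iff] at hyg
        rw [hyg] at hyTp
        exact hgTp hyTp
    · obtain ⟨hpnc1, z1, hz1, hadj_pz1⟩ := hc1b
      have hz01 : z0 = z1 :=
        unique_edge hG (fun s t hs' ht' => hd v s hs' t ht') hPv
          (hTcv c0 hc0v hz0) (hTcv c1 hc1v hz1) hadj_pz0 hadj_pz1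
      have hcc : c0 = c1 := by
        by_contra hne
        exact hdisj c0 c1 hc0v hc1v hne z0 hz0 (hz01 ▸ hz1)
      have hvm : v ∈ bdry G f c0 := ⟨hvnotc c0 hc0v, y, by rw [hcc]; exact hyc1, hadj_vy⟩
      have hgm : g ∈ bdry G f c0 :=
        ⟨fun h => hgTp (hTvp (hTcv c0 hc0v h)), u, huc0, hadj_gu⟩
      have hpm : p ∈ bdry G f c0 := ⟨hpnc0, z0, hz0, hadj_pz0⟩
      have hsub3 : ({p, v, g} : Set V) ⊆ bdry G f c0 := by
        intro t ht
        rcases Set.mem_insert_iff.mp ht with rfl | ht'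
        · exact hpm
        rcases Set.mem_insert_iff.mp ht' with rfl | ht''
        · exact hvm
        · rw [Set.mem_singleton_iff] at ht''; rw [ht'']; exact hgm
      have hvg : v ≠ g := fun h => hgTp (h ▸ hvTp)
      have h3 : ({p, v, g} : Set V).ncard = 3 := by
        rw [Set.ncard_insert_of_notMem (by
          simp only [Set.mem_insert_iff, Set.mem_singleton_iff]
          push_neg
          exact ⟨hvne.symm, fun h => hgp h.symm⟩) (Set.toFinite _),
          Set.ncard_pair hvg]
      have hle3 := Set.ncard_le_ncard hsub3 (Set.toFinite _)
      rw [h3] at hle3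
      have := h2 c0
      omega
  rcases not_and_or.mp hEXCL with hgB | hvB
  · obtain ⟨h', hh'⟩ : ∃ h', bdry G f p = {g, h'} := by
      obtain ⟨a2, b2, hab2, habs2⟩ := Set.ncard_eq_two.mp hP2
      have hgmem : g ∈ ({a2, b2} : Set V) := habs2 ▸ hgbp
      rcases Set.mem_insert_iff.mp hgmem with hga | hgb
      · exact ⟨b2, by rw [habs2, hga]⟩
      · rw [Set.mem_singleton_iff] at hgb
        exact ⟨a2, by rw [habs2, hgb, Set.pair_comm]⟩
    have hsub : bdry G (rotate G f v p) p ⊆ ({h', v} : Set V) := by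
      intro t ht
      rcases hSUBV ht with htp | htv
      · rw [hh'] at htp
        rcases Set.mem_insert_iff.mp htp with rfl | ht''
        · exact absurd ht hgB
        · rw [Set.mem_singleton_iff] at ht''; rw [ht'']; left; rfl
      · rw [Set.mem_singleton_iff] at htv; rw [htv]; right; rfl
    have := Set.ncard_le_ncard hsub (Set.toFinite _)
    have h4 := Set.ncard_insert_le h' ({v} : Set V)
    rw [Set.ncard_singleton] at h4
    omega
  · have hsub : bdry G (rotate G f v p) p ⊆ bdry G f p := by
      intro t ht
      rcases hSUBV ht with htp | htv
      · exact htp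
      · rw [Set.mem_singleton_iff] at htv; rw [htv] at ht; exact absurd ht hvB
    have := Set.ncard_le_ncard hsub (Set.toFinite _)
    have := h2 p
    omega

end Preserve

/-- If the rotation of `v` with its parent `p` would violate the 2-cut
property, then `|∂(T_v)| = 1` and `|∂(T_p)| = 2`; in particular `p` is not the root,
and rotating `p` with its own parent preserves the 2-cut property. -/
theorem parent_rotation_allowed_of_rotation_disallowed [Fintype V] (G : SimpleGraph V)
    (hG : G.IsTree) (par : V → Option V) (r : V) (hroot : par r = none)
    (hT : IsSearchTree G par Set.univ r) (h2 : TwoCut G par)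
    (v p : V) (hvp : par v = some p)
    (hbad : ¬ TwoCut G (rotate G par v p)) :
    (bdry G par v).ncard = 1 ∧ (bdry G par p).ncard = 2 ∧ p ≠ r ∧
      ∃ q, par p = some q ∧ TwoCut G (rotate G par p q) := by
  by_cases hcnd : (bdry G par v).ncard = 1 ∧ (bdry G par p).ncard = 2
  case neg => exact absurd (rot_preserves hG hroot hT h2 hvp hcnd) hbad
  obtain ⟨hv1, hp2⟩ := hcnd
  obtain ⟨ha, hb, hc, hd⟩ := stt_global hroot hT hG.isConnected
  have hpr : p ≠ r := by
    intro h
    have hempty : bdry G par p = ∅ := by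
      ext t
      simp only [bdry, Set.mem_setOf_eq, Set.mem_empty_iff_false, iff_false, not_and]
      intro ht
      exact absurd (show t ∈ subtree par p by rw [h]; exact ha t) ht
    rw [hempty] at hp2
    simp at hp2
  obtain ⟨q, hq⟩ : ∃ q, par p = some q := by
    rcases (ha p).cases_head with h | ⟨q, hq, _⟩
    · exact absurd h hpr
    · exact ⟨q, hq⟩
  refine ⟨hv1, hp2, hpr, q, hq, rot_preserves hG hroot hT h2 hq ?_⟩
  rintro ⟨h1, _⟩
  omega
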